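/- The vector space of all harmonic functions $u : \mathbb{D} \to \mathbb{R}$ such that $u(z) \to 0$ along every nontangential path to $\zeta$, for all $\zeta \in \partial\mathbb{D}$ outside a set of logarithmic capacity zero, is infinite-dimensional. -/

import Mathlib

open Complex Filter Topology

/-- `V_n(E)` for `E ⊆ ℂ`: supremum of products of pairwise distances over
`n`-point collections in `E`. -/
noncomputable def VnC (E : Set ℂ) (n : ℕ) : ℝ :=
  sSup {v : ℝ | ∃ z : Fin n → ℂ, (∀ i, z i ∈ E) ∧
    v = ∏ p ∈ Finset.univ.filter (fun p : Fin n × Fin n => p.1 < p.2), dist (z p.1) (z p.2)}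

/-- The logarithmic capacity (transfinite diameter) of `E ⊆ ℂ`: the limit
(= infimum, the sequence being nonincreasing) of `V_n^{2/(n(n-1))}`. -/
noncomputable def capC (E : Set ℂ) : ℝ :=
  ⨅ n : ℕ, VnC E (n + 2) ^ ((2 : ℝ) / (((n : ℝ) + 2) * ((n : ℝ) + 1)))

/-- A `C²` function `u` is harmonic on `s ⊆ ℂ` if its Laplacian (the sum of the
two pure second partial derivatives) vanishes on `s`. -/
def IsHarmonicOn (u : ℂ → ℝ) (s : Set ℂ) : Prop :=
  ContDiffOn ℝ 2 u s ∧ ∀ z ∈ s,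
    deriv (fun x : ℝ => deriv (fun x' : ℝ => u (↑x' + ↑z.im * Complex.I)) x) z.re +
    deriv (fun y : ℝ => deriv (fun y' : ℝ => u (↑z.re + ↑y' * Complex.I)) y) z.im = 0

/-- The Stolz region at `ζ ∈ ∂𝔻` with aperture parameter `M`; nontangential
paths to `ζ` are exactly paths eventually lying in some such region. -/
def stolzAt (ζ : ℂ) (M : ℝ) : Set ℂ :=
  {z : ℂ | ‖z‖ < 1 ∧ ‖z - ζ‖ ≤ M * (1 - ‖z‖)}

/-! ### Auxiliary lemmas -/

lemma VnC_singleton (ζ : ℂ) (n : ℕ) (hn : 2 ≤ n) : VnC {ζ} n = 0 := by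
  have h1 : (1 : ℕ) < n := by omega
  have h0 : (0 : ℕ) < n := by omega
  have hzero : ∀ z : Fin n → ℂ, (∀ i, z i ∈ ({ζ} : Set ℂ)) →
      (∏ p ∈ Finset.univ.filter (fun p : Fin n × Fin n => p.1 < p.2),
        dist (z p.1) (z p.2)) = 0 := by
    intro z hz
    apply Finset.prod_eq_zero (i := ((⟨0, h0⟩ : Fin n), (⟨1, h1⟩ : Fin n)))
    · simp [Finset.mem_filter, Fin.mk_lt_mk]
    · have e1 : z ⟨0, h0⟩ = ζ := hz _
      have e2 : z ⟨1, h1⟩ = ζ := hz _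
      simp [e1, e2]
  have hset : {v : ℝ | ∃ z : Fin n → ℂ, (∀ i, z i ∈ ({ζ} : Set ℂ)) ∧
      v = ∏ p ∈ Finset.univ.filter (fun p : Fin n × Fin n => p.1 < p.2),
        dist (z p.1) (z p.2)} = {0} := by
    ext v
    simp only [Set.mem_setOf_eq, Set.mem_singleton_iff]
    constructor
    · rintro ⟨z, hz, rfl⟩
      exact hzero z hz
    · rintro rfl
      exact ⟨fun _ => ζ, fun _ => rfl, (hzero _ (fun _ => rfl)).symm⟩
  rw [VnC, hset, csSup_singleton]

lemma capC_singleton (ζ : ℂ) : capC {ζ} = 0 := by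
  rw [capC]
  have h : ∀ n : ℕ, VnC {ζ} (n + 2) ^ ((2 : ℝ) / (((n : ℝ) + 2) * ((n : ℝ) + 1))) = 0 := by
    intro n
    rw [VnC_singleton _ _ (by omega)]
    apply Real.zero_rpow
    positivity
  simp only [h]
  exact ciInf_const

/-- the real part of a holomorphic function is harmonic -/
lemma isHarmonicOn_re_of_holo {g : ℂ → ℂ} {s : Set ℂ} (hs : IsOpen s)
    (hg : DifferentiableOn ℂ g s) : IsHarmonicOn (fun z => (g z).re) s := by
  have hg' : DifferentiableOn ℂ (deriv g) s :=
    ((hg.analyticOnNhd hs).deriv).differentiableOn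
  -- horizontal derivative
  have key : ∀ (G : ℂ → ℂ), DifferentiableOn ℂ G s → ∀ b x : ℝ, (↑x + ↑b * Complex.I) ∈ s →
      HasDerivAt (fun x' : ℝ => (G (↑x' + ↑b * Complex.I)).re)
        ((deriv G (↑x + ↑b * Complex.I)).re) x := by
    intro G hG b x hx
    have hG1 : HasDerivAt G (deriv G (↑x + ↑b * Complex.I)) (↑x + ↑b * Complex.I) :=
      (hG.differentiableAt (hs.mem_nhds hx)).hasDerivAt
    have h2 : HasDerivAt (fun w : ℂ => w + ↑b * Complex.I) 1 ↑x :=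
      (hasDerivAt_id _).add_const _
    have h3 : HasDerivAt (fun w : ℂ => G (w + ↑b * Complex.I))
        (deriv G (↑x + ↑b * Complex.I)) ↑x := by
      have h3' := hG1.comp (↑x : ℂ) h2
      rw [mul_one] at h3'
      exact h3'
    exact h3.real_of_complex
  -- vertical derivative
  have keyV : ∀ (G : ℂ → ℂ), DifferentiableOn ℂ G s → ∀ a y : ℝ, (↑a + ↑y * Complex.I) ∈ s →
      HasDerivAt (fun y' : ℝ => (G (↑a + ↑y' * Complex.I)).re)
        ((deriv G (↑a + ↑y * Complex.I) * Complex.I).re) y := by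
    intro G hG a y hy
    have hG1 : HasDerivAt G (deriv G (↑a + ↑y * Complex.I)) (↑a + ↑y * Complex.I) :=
      (hG.differentiableAt (hs.mem_nhds hy)).hasDerivAt
    have h2 : HasDerivAt (fun w : ℂ => ↑a + w * Complex.I) Complex.I ↑y := by
      simpa using ((hasDerivAt_id ((y : ℝ) : ℂ)).mul_const Complex.I).const_add (↑a : ℂ)
    have h3 : HasDerivAt (fun w : ℂ => G (↑a + w * Complex.I))
        (deriv G (↑a + ↑y * Complex.I) * Complex.I) ↑y := by
      exact hG1.comp (↑y : ℂ) h2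
    exact h3.real_of_complex
  constructor
  · have h1 : ContDiffOn ℂ 2 g s := hg.contDiffOn hs
    have h2 : ContDiffOn ℝ 2 g s := h1.restrict_scalars ℝ
    exact Complex.reCLM.contDiff.comp_contDiffOn h2
  · intro z hz
    have hzs : (↑z.re + ↑z.im * Complex.I) ∈ s := by rwa [Complex.re_add_im]
    have hopenH : IsOpen {x : ℝ | (↑x + ↑z.im * Complex.I) ∈ s} :=
      hs.preimage (by continuity)
    have hopenV : IsOpen {y : ℝ | (↑z.re + ↑y * Complex.I) ∈ s} :=
      hs.preimage (by continuity)
    have hx : deriv (fun x : ℝ => deriv (fun x' : ℝ => (g (↑x' + ↑z.im * Complex.I)).re) x) z.re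
        = (deriv (deriv g) z).re := by
      have hev : (fun x : ℝ => deriv (fun x' : ℝ => (g (↑x' + ↑z.im * Complex.I)).re) x)
          =ᶠ[𝓝 z.re] (fun x : ℝ => (deriv g (↑x + ↑z.im * Complex.I)).re) := by
        filter_upwards [hopenH.mem_nhds hzs] with x hx
        exact (key g hg z.im x hx).deriv
      rw [hev.deriv_eq, (key (deriv g) hg' z.im z.re hzs).deriv, Complex.re_add_im]
    have hy : deriv (fun y : ℝ => deriv (fun y' : ℝ => (g (↑z.re + ↑y' * Complex.I)).re) y) z.im
        = (deriv (deriv g) z * Complex.I * Complex.I).re := by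
      have hev : (fun y : ℝ => deriv (fun y' : ℝ => (g (↑z.re + ↑y' * Complex.I)).re) y)
          =ᶠ[𝓝 z.im] (fun y : ℝ => ((fun w => deriv g w * Complex.I) (↑z.re + ↑y * Complex.I)).re) := by
        filter_upwards [hopenV.mem_nhds hzs] with y hy
        exact (keyV g hg z.re y hy).deriv
      have hH : DifferentiableOn ℂ (fun w => deriv g w * Complex.I) s :=
        hg'.mul_const _
      have h4 := (keyV (fun w => deriv g w * Complex.I) hH z.re z.im hzs).deriv
      have h5 : deriv (fun w => deriv g w * Complex.I) (↑z.re + ↑z.im * Complex.I)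
          = deriv (deriv g) z * Complex.I := by
        rw [Complex.re_add_im]
        exact deriv_mul_const (by
          exact (hg'.differentiableAt (hs.mem_nhds hz))) _
      rw [hev.deriv_eq, h4, h5]
    rw [hx, hy]
    have : deriv (deriv g) z * Complex.I * Complex.I = -(deriv (deriv g) z) := by
      rw [mul_assoc, Complex.I_mul_I, mul_neg_one]
    rw [this]
    simp

lemma sq_norm_one {a : ℂ} (ha : ‖a‖ = 1) : a.re ^ 2 + a.im ^ 2 = 1 := by
  have h := Complex.sq_norm a
  rw [Complex.normSq_apply] at h
  rw [ha] at h
  nlinarith [h]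

lemma re_div_circle {a b : ℂ} (ha : ‖a‖ = 1) (hb : ‖b‖ = 1) : ((a + b) / (a - b)).re = 0 := by
  have ha' := sq_norm_one ha
  have hb' := sq_norm_one hb
  rw [Complex.div_re]
  simp only [Complex.add_re, Complex.sub_re, Complex.add_im, Complex.sub_im]
  rw [← add_div, div_eq_zero_iff]
  left
  nlinarith [ha', hb']

/-- The space of harmonic functions on the unit disk having nontangential
limit `0` at every boundary point outside a set of logarithmic capacity zero is
infinite-dimensional: it contains linearly independent families of arbitrary
finite cardinality. -/
theorem harmonic_null_NT_space_infinite_dim :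
    ∀ n : ℕ, ∃ f : Fin n → (ℂ → ℝ), LinearIndependent ℝ f ∧
      ∀ i : Fin n, IsHarmonicOn (f i) (Metric.ball 0 1) ∧
        ∃ N : Set ℂ, N ⊆ Metric.sphere (0 : ℂ) 1 ∧ capC N = 0 ∧
          ∀ ζ ∈ Metric.sphere (0 : ℂ) 1, ζ ∉ N → ∀ M > (1 : ℝ),
            Filter.Tendsto (f i) (nhdsWithin ζ (stolzAt ζ M)) (nhds 0) := by
  intro n
  -- distinct points on the unit circle
  set ζv : Fin n → ℂ := fun i => Complex.exp (Complex.ofReal ((i : ℝ) / (n : ℝ)) * Complex.I) with hζv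
  have hnorm : ∀ i, ‖ζv i‖ = 1 := by
    intro i
    rw [hζv]
    simp [Complex.norm_exp]
  have hinj : Function.Injective ζv := by
    intro i j hij
    have hn : (0 : ℝ) < n := by exact_mod_cast i.pos
    rw [hζv] at hij
    simp only at hij
    rw [Complex.exp_eq_exp_iff_exists_int] at hij
    obtain ⟨k, hk⟩ := hij
    have him : (i : ℝ) / n = (j : ℝ) / n + k * (2 * Real.pi) := by
      have := congrArg Complex.im hk
      simpa using this
    have hi1 : (i : ℝ) / n < 1 := (div_lt_one hn).mpr (by exact_mod_cast i.isLt)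
    have hj1 : (j : ℝ) / n < 1 := (div_lt_one hn).mpr (by exact_mod_cast j.isLt)
    have hi0 : (0 : ℝ) ≤ (i : ℝ) / n := by positivity
    have hj0 : (0 : ℝ) ≤ (j : ℝ) / n := by positivity
    have hk0 : k = 0 := by
      by_contra hk0
      have h1 : (1 : ℝ) ≤ |(k : ℝ)| := by
        exact_mod_cast Int.one_le_abs (by exact_mod_cast hk0)
      have hpi := Real.pi_gt_three
      rcases abs_cases (k : ℝ) with ⟨he, _⟩ | ⟨he, _⟩ <;> nlinarith [him]
    rw [hk0] at him
    push_cast at him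
    have hij' : (i : ℝ) = (j : ℝ) := by
      have hne : (n : ℝ) ≠ 0 := ne_of_gt hn
      have h' : (i : ℝ) / n = (j : ℝ) / n := by linarith [him]
      exact (div_left_inj' hne).mp h'
    exact Fin.ext (by exact_mod_cast hij')
  have hne0 : ∀ i, ζv i ≠ 0 := by
    intro i h
    have := hnorm i
    rw [h] at this
    simp at this
  -- the functions
  set f : Fin n → (ℂ → ℝ) := fun i z => ((ζv i + z) / (ζv i - z)).re with hf
  -- differentiability of the Möbius maps on the ball
  have hdiff : ∀ i, DifferentiableOn ℂ (fun z => (ζv i + z) / (ζv i - z)) (Metric.ball 0 1) := by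
    intro i
    apply DifferentiableOn.div
    · exact (differentiable_const _ |>.add differentiable_id).differentiableOn
    · exact (differentiable_const _ |>.sub differentiable_id).differentiableOn
    · intro z hz h0
      rw [sub_eq_zero] at h0
      rw [Metric.mem_ball, dist_zero_right] at hz
      rw [← h0, hnorm i] at hz
      norm_num at hz
  -- continuity / boundary values
  have hcont0 : ∀ i (ζ : ℂ), ‖ζ‖ = 1 → ζ ≠ ζv i → Filter.Tendsto (f i) (nhds ζ) (nhds 0) := by
    intro i ζ hζ hne
    have hden : ζv i - ζ ≠ 0 := sub_ne_zero.mpr (fun h => hne h.symm)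
    have hca : ContinuousAt (fun z => (ζv i + z) / (ζv i - z)) ζ := by
      apply ContinuousAt.div
      · exact (continuous_const.add continuous_id).continuousAt
      · exact (continuous_const.sub continuous_id).continuousAt
      · exact hden
    have hca2 : ContinuousAt (f i) ζ := Complex.continuous_re.continuousAt.comp hca
    have hval : f i ζ = 0 := re_div_circle (hnorm i) hζ
    rw [← hval]
    exact hca2.tendsto
  refine ⟨f, ?_, ?_⟩
  · -- linear independence
    rw [Fintype.linearIndependent_iff]
    intro c hc i
    by_contra hci
    have hpt : ∀ t : ℝ, ∑ j, c j * f j ((t : ℂ) * ζv i) = 0 := by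
      intro t
      have := congrFun hc ((t : ℂ) * ζv i)
      simpa using this
    have hfi : ∀ t : ℝ, f i ((t : ℂ) * ζv i) = ((1 + t) / (1 - t) : ℝ) := by
      intro t
      have e1 : ζv i + (t : ℂ) * ζv i = ζv i * (1 + t) := by ring
      have e2 : ζv i - (t : ℂ) * ζv i = ζv i * (1 - t) := by ring
      rw [hf]
      simp only
      rw [e1, e2, mul_div_mul_left _ _ (hne0 i)]
      rw [show ((1 : ℂ) + (t : ℂ)) / (1 - (t : ℂ)) = (((1 + t) / (1 - t) : ℝ) : ℂ) by push_cast; ring_nf]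
      exact Complex.ofReal_re _
    -- the tail tends to 0
    have hmap : Filter.Tendsto (fun t : ℝ => (t : ℂ) * ζv i) (nhdsWithin 1 (Set.Iio 1)) (nhds (ζv i)) := by
      have hco : Continuous (fun t : ℝ => (t : ℂ) * ζv i) :=
        (Complex.continuous_ofReal.mul continuous_const)
      have := (hco.tendsto 1).mono_left (nhdsWithin_le_nhds (s := Set.Iio (1:ℝ)))
      simpa using this
    have htail : Filter.Tendsto (fun t : ℝ => ∑ j ∈ Finset.univ.erase i, c j * f j ((t : ℂ) * ζv i))
        (nhdsWithin 1 (Set.Iio 1)) (nhds 0) := by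
      have : Filter.Tendsto (fun t : ℝ => ∑ j ∈ Finset.univ.erase i, c j * f j ((t : ℂ) * ζv i))
          (nhdsWithin 1 (Set.Iio 1)) (nhds (∑ j ∈ Finset.univ.erase i, c j * (0 : ℝ))) := by
        apply tendsto_finset_sum
        intro j hj
        have hjne : ζv i ≠ ζv j := fun h => (Finset.ne_of_mem_erase hj) (hinj h.symm)
        exact ((hcont0 j (ζv i) (hnorm i) hjne).comp hmap).const_mul _
      simpa using this
    have hmain : Filter.Tendsto (fun t : ℝ => c i * ((1 + t) / (1 - t)))
        (nhdsWithin 1 (Set.Iio 1)) (nhds 0) := by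
      have heq : (fun t : ℝ => c i * ((1 + t) / (1 - t)))
          =ᶠ[nhdsWithin 1 (Set.Iio 1)]
          (fun t : ℝ => -∑ j ∈ Finset.univ.erase i, c j * f j ((t : ℂ) * ζv i)) := by
        filter_upwards [self_mem_nhdsWithin] with t ht
        have hpt' := hpt t
        rw [← Finset.add_sum_erase _ _ (Finset.mem_univ i)] at hpt'
        rw [hfi t] at hpt'
        linarith
      refine Filter.Tendsto.congr' heq.symm ?_
      simpa using htail.neg
    have h2 : Filter.Tendsto (fun t : ℝ => (1 + t) / (1 - t)) (nhdsWithin 1 (Set.Iio 1)) (nhds 0) := by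
      have := hmain.const_mul (c i)⁻¹
      simp only [← mul_assoc, inv_mul_cancel₀ hci, one_mul, mul_zero] at this
      exact this
    have h3 : Filter.Tendsto (fun t : ℝ => (1 + t) / (1 - t) * (1 - t))
        (nhdsWithin 1 (Set.Iio 1)) (nhds 0) := by
      have hsub : Filter.Tendsto (fun t : ℝ => 1 - t) (nhdsWithin 1 (Set.Iio 1)) (nhds 0) := by
        have : Filter.Tendsto (fun t : ℝ => 1 - t) (nhds 1) (nhds (1 - 1)) :=
          (continuous_const.sub continuous_id).tendsto 1
        simpa using this.mono_left nhdsWithin_le_nhds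
      simpa using h2.mul hsub
    have heq2 : (fun t : ℝ => (1 + t) / (1 - t) * (1 - t))
        =ᶠ[nhdsWithin 1 (Set.Iio 1)] (fun t : ℝ => 1 + t) := by
      filter_upwards [self_mem_nhdsWithin] with t ht
      have : (1 : ℝ) - t ≠ 0 := sub_ne_zero.mpr (ne_of_gt ht)
      field_simp
    have h4 : Filter.Tendsto (fun t : ℝ => 1 + t) (nhdsWithin 1 (Set.Iio 1)) (nhds 2) := by
      have : Filter.Tendsto (fun t : ℝ => 1 + t) (nhds 1) (nhds (1 + 1)) :=
        (continuous_const.add continuous_id).tendsto 1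
      have h' := this.mono_left (nhdsWithin_le_nhds (s := Set.Iio (1:ℝ)))
      norm_num at h'
      exact h'
    have : (0 : ℝ) = 2 := tendsto_nhds_unique (h3.congr' heq2) h4
    norm_num at this
  · -- harmonicity and nontangential limits
    intro i
    refine ⟨?_, {ζv i}, ?_, capC_singleton _, ?_⟩
    · exact isHarmonicOn_re_of_holo Metric.isOpen_ball (hdiff i)
    · intro z hz
      rw [hz]
      simp [hnorm i]
    · intro ζ hζ hζN M _
      have hζ1 : ‖ζ‖ = 1 := by
        rw [Metric.mem_sphere, dist_zero_right] at hζ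
        exact hζ
      have hne : ζ ≠ ζv i := fun h => hζN (by simp [h])
      exact (hcont0 i ζ hζ1 hne).mono_left nhdsWithin_le_nhds
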